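/- Let ω ∈ ℝ and let ρ, τ : ℝ → ℝ be twice differentiable functions with τ(x) ≠ 0 and τ'(x) ≠ 0 for all x, satisfying ρ''(x) = −ω·ρ(x), τ''(x) = −ω·τ(x), and ρ'(x)·τ'(x) = −ω·ρ(x)·τ(x) for all x ∈ ℝ. Then the function x ↦ (ρ(x)·ρ'(x))/(τ(x)·τ'(x)) is constant on ℝ; equivalently, writing σ = ρ² and κ = τ², the ratio σ'/κ' is constant. -/

import Mathlib

/-- The key computation in the proof of the KEM Separation
Theorem: for warping functions `ρ`, `τ` of a warped product decomposition of a
space of constant curvature with one-dimensional base (so `ρ'' = −ω·ρ`,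
`τ'' = −ω·τ`, `ρ'·τ' = −ω·ρ·τ`, with `τ` and `τ'` nowhere zero), the ratio
`(ρ·ρ')/(τ·τ') = σ'/κ'` (where `σ = ρ²`, `κ = τ²`) is constant. -/
theorem warped_product_sigma_ratio_constant
    (ω : ℝ) (ρ τ : ℝ → ℝ)
    (hρ : ContDiff ℝ 2 ρ) (hτ : ContDiff ℝ 2 τ)
    (hτ0 : ∀ x : ℝ, τ x ≠ 0) (hτ'0 : ∀ x : ℝ, deriv τ x ≠ 0)
    (hρ'' : ∀ x : ℝ, deriv (deriv ρ) x = -ω * ρ x)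
    (hτ'' : ∀ x : ℝ, deriv (deriv τ) x = -ω * τ x)
    (hmix : ∀ x : ℝ, deriv ρ x * deriv τ x = -ω * ρ x * τ x) :
    ∃ c : ℝ, ∀ x : ℝ, (ρ x * deriv ρ x) / (τ x * deriv τ x) = c := by
  have hρd : Differentiable ℝ ρ := hρ.differentiable (by norm_num)
  have hτd : Differentiable ℝ τ := hτ.differentiable (by norm_num)
  have hρ'd : Differentiable ℝ (deriv ρ) :=
    (hρ.iterate_deriv' 1 1).differentiable (by norm_num)
  have hτ'd : Differentiable ℝ (deriv τ) :=
    (hτ.iterate_deriv' 1 1).differentiable (by norm_num)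
  set f : ℝ → ℝ := fun x => (ρ x * deriv ρ x) / (τ x * deriv τ x) with hf
  have hNd : Differentiable ℝ (fun x => ρ x * deriv ρ x) := hρd.mul hρ'd
  have hDd : Differentiable ℝ (fun x => τ x * deriv τ x) := hτd.mul hτ'd
  have hD0 : ∀ x, τ x * deriv τ x ≠ 0 := fun x => mul_ne_zero (hτ0 x) (hτ'0 x)
  have hfd : Differentiable ℝ f := hNd.div hDd hD0
  have key : ∀ x, deriv f x = 0 := by
    intro x
    have hN' : deriv (fun x => ρ x * deriv ρ x) x
        = deriv ρ x * deriv ρ x + ρ x * (-ω * ρ x) := by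
      rw [deriv_fun_mul (hρd x) (hρ'd x), hρ'' x]
    have hD' : deriv (fun x => τ x * deriv τ x) x
        = deriv τ x * deriv τ x + τ x * (-ω * τ x) := by
      rw [deriv_fun_mul (hτd x) (hτ'd x), hτ'' x]
    rw [hf, deriv_fun_div (hNd x) (hDd x) (hD0 x), hN', hD']
    rw [div_eq_zero_iff]
    left
    linear_combination (deriv ρ x * τ x - ρ x * deriv τ x) * hmix x
  obtain ⟨c, hc⟩ : ∃ c, ∀ x, f x = c := by
    refine ⟨f 0, fun x => ?_⟩
    have := is_const_of_deriv_eq_zero hfd key x 0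
    simpa using this
  exact ⟨c, hc⟩
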